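/- For all $x \in [0, 1/4]$, the inverse binary entropy function satisfies $h_2^{-1}(1 - x^2) \leq \frac{1}{2} - \frac{\sqrt{\ln 2}}{2}\, x$, where $h_2^{-1}: [0,1] \to [0,1/2]$ is the inverse of the binary entropy function $h_2$ restricted to $[0,1/2]$. -/
import Mathlib

lemma log_one_sub_le_aux {t : ℝ} (h0 : 0 ≤ t) (h1 : t ≤ 1/4) :
    Real.log (1 - t) ≤ -t - t^2/2 + (4/3)*t^3 := by
  have habs : |t| < 1 := by rw [abs_of_nonneg h0]; linarith
  have := Real.abs_log_sub_add_sum_range_le habs 2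
  simp only [Finset.sum_range_succ, Finset.sum_range_zero] at this
  rw [abs_of_nonneg h0] at this
  have h2 : t^3 / (1 - t) ≤ (4/3) * t^3 := by
    rw [div_le_iff₀ (by linarith)]
    nlinarith [pow_nonneg h0 3]
  have := abs_le.mp this
  push_cast at this
  nlinarith [this.2]

lemma log_one_add_le_aux {t : ℝ} (h0 : 0 ≤ t) (h1 : t ≤ 1/4) :
    Real.log (1 + t) ≤ t - t^2/2 + (4/3)*t^3 := by
  have habs : |(-t)| < 1 := by rw [abs_neg, abs_of_nonneg h0]; linarith
  have := Real.abs_log_sub_add_sum_range_le habs 2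
  simp only [Finset.sum_range_succ, Finset.sum_range_zero] at this
  rw [abs_neg, abs_of_nonneg h0, sub_neg_eq_add] at this
  have h2 : t^3 / (1 - t) ≤ (4/3) * t^3 := by
    rw [div_le_iff₀ (by linarith)]
    nlinarith [pow_nonneg h0 3]
  have := abs_le.mp this
  push_cast at this
  nlinarith [this.2]

/-- The binary entropy function. -/
noncomputable def h2 (x : ℝ) : ℝ :=
  x * Real.logb 2 (1 / x) + (1 - x) * Real.logb 2 (1 / (1 - x))

/-- `h₂⁻¹(1 - x²) ≤ 1/2 - (√(ln 2)/2)·x` for `x ∈ [0,1/4]`: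
if `y ∈ [0,1/2]` satisfies `h₂(y) = 1 - x²` then `y ≤ 1/2 - (√(ln 2)/2)·x`. -/
theorem stmt10 (x y : ℝ) (hx0 : 0 ≤ x) (hx : x ≤ 1 / 4) (hy0 : 0 ≤ y) (hy : y ≤ 1 / 2)
    (h : h2 y = 1 - x ^ 2) :
    y ≤ 1 / 2 - (Real.sqrt (Real.log 2) / 2) * x := by
  have hlog2 : (0:ℝ) < Real.log 2 := Real.log_pos (by norm_num)
  rcases eq_or_lt_of_le hy0 with h0 | hy0'
  · exfalso
    have : h2 y = 0 := by simp [h2, ← h0]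
    rw [this] at h
    nlinarith
  -- y > 0
  set t : ℝ := 1 - 2*y with ht_def
  have ht0 : 0 ≤ t := by simp only [ht_def]; linarith
  have ht1 : t < 1 := by simp only [ht_def]; linarith
  suffices hst : Real.sqrt (Real.log 2) * x ≤ t by
    simp only [ht_def] at hst; linarith
  by_cases hcase : 1/4 ≤ t
  · have hs1 : Real.sqrt (Real.log 2) ≤ 1 := by
      rw [show (1:ℝ) = Real.sqrt 1 by simp]
      exact Real.sqrt_le_sqrt (by linarith [Real.log_le_sub_one_of_pos (by norm_num : (0:ℝ) < 2)])
    nlinarith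
  · push_neg at hcase
    have hy1 : y < 1 := by linarith
    have key : Real.log 2 * x^2 = y * Real.log (1-t) + (1-y) * Real.log (1+t) := by
      have e1 : (1:ℝ) - t = 2 * y := by simp only [ht_def]; ring
      have e2 : (1:ℝ) + t = 2 * (1 - y) := by simp only [ht_def]; ring
      have hly : Real.log (1 - t) = Real.log 2 + Real.log y := by
        rw [e1, Real.log_mul (by norm_num) (ne_of_gt hy0')]
      have hly2 : Real.log (1 + t) = Real.log 2 + Real.log (1 - y) := by
        rw [e2, Real.log_mul (by norm_num) (by linarith)]
      have hh2 : h2 y * Real.log 2 = -(y * Real.log y) - (1-y) * Real.log (1-y) := by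
        simp only [h2, Real.logb, one_div, Real.log_inv]
        field_simp
        ring
      rw [hly, hly2]
      nlinarith [hh2, h]
    have hb1 := log_one_sub_le_aux ht0 (le_of_lt hcase)
    have hb2 := log_one_add_le_aux ht0 (le_of_lt hcase)
    have hDt : Real.log 2 * x^2 ≤ t^2 := by
      rw [key]
      have hy' : 0 ≤ 1 - y := by linarith
      nlinarith [mul_le_mul_of_nonneg_left hb1 (le_of_lt hy0'),
        mul_le_mul_of_nonneg_left hb2 hy', pow_nonneg ht0 3, sq_nonneg t]
    have := Real.sqrt_le_sqrt hDt
    rwa [Real.sqrt_mul (le_of_lt hlog2), Real.sqrt_sq hx0, Real.sqrt_sq ht0] at this
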